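/- Let f : ℝ^N → ℝ be a convex continuous function with at least one global minimizer, let λ > 0 and τ ∈ (0, 1). Then for any starting point x₀ ∈ ℝ^N, the damped proximal iteration x_{k+1} = τ x_k + (1 − τ) prox_{λf}(x_k) converges to a global minimizer of f (a stationary point of f). -/

import Mathlib

open Filter RealInnerProductSpace

lemma aux_small_t (A B : ℝ) (h : ∀ t : ℝ, 0 < t → t ≤ 1 → 0 ≤ A + t * B) : 0 ≤ A := by
  by_contra hA
  push_neg at hA
  have hden : (0:ℝ) < |B| - A + 1 := by nlinarith [abs_nonneg B]
  set t := -A / (|B| - A + 1) with ht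
  have ht0 : 0 < t := div_pos (by linarith) hden
  have ht1 : t ≤ 1 := by rw [ht, div_le_one hden]; nlinarith [abs_nonneg B]
  have h1 := h t ht0 ht1
  have hB : t * B ≤ t * |B| := mul_le_mul_of_nonneg_left (le_abs_self B) ht0.le
  have h2 : t * |B| < -A := by
    rw [ht, div_mul_eq_mul_div, div_lt_iff₀ hden]
    nlinarith [abs_nonneg B]
  linarith

lemma aux_antitone_zero (a : ℕ → ℝ) (ha : Antitone a) (h0 : ∀ n, 0 ≤ a n)
    (φ : ℕ → ℕ) (hsub : Tendsto (a ∘ φ) atTop (nhds 0)) :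
    Tendsto a atTop (nhds 0) := by
  rw [Metric.tendsto_atTop] at hsub ⊢
  intro ε hε
  obtain ⟨J, hJ⟩ := hsub ε hε
  refine ⟨φ J, fun n hn => ?_⟩
  have h1 := hJ J le_rfl
  simp only [Function.comp, Real.dist_eq, sub_zero, abs_of_nonneg (h0 _)] at h1 ⊢
  exact lt_of_le_of_lt (ha hn) h1

set_option maxHeartbeats 1000000 in
/-- For a convex continuous `f` with at least one global minimizer, the damped
proximal iteration `x_{k+1} = τ x_k + (1 - τ) prox_{λf}(x_k)` converges to a
global minimizer of `f` from any starting point. -/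
theorem damped_prox_iteration_converges (N : ℕ) (f : EuclideanSpace ℝ (Fin N) → ℝ)
    (hconv : ConvexOn ℝ Set.univ f) (hcont : Continuous f)
    (hmin : ∃ xstar, IsMinOn f Set.univ xstar)
    (lam : ℝ) (hlam : 0 < lam) (τ : ℝ) (hτ : τ ∈ Set.Ioo (0 : ℝ) 1)
    (prox : EuclideanSpace ℝ (Fin N) → EuclideanSpace ℝ (Fin N))
    (hprox : ∀ y, IsMinOn (fun x => f x + (1 / (2 * lam)) * ‖x - y‖ ^ 2) Set.univ (prox y))
    (x : ℕ → EuclideanSpace ℝ (Fin N))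
    (hiter : ∀ k, x (k + 1) = τ • x k + (1 - τ) • prox (x k)) :
    ∃ xlim, IsMinOn f Set.univ xlim ∧
      Filter.Tendsto x Filter.atTop (nhds xlim) := by
  obtain ⟨hτ0, hτ1⟩ := hτ
  set c : ℝ := 1 / (2 * lam) with hc
  have hcpos : 0 < c := by positivity
  -- basic prox inequality
  have prox_ineq : ∀ a q, f (prox a) ≤ f q + 2 * c * ⟪prox a - a, q - prox a⟫ := by
    intro a q
    set p := prox a with hp
    have key : ∀ t : ℝ, 0 < t → t ≤ 1 →
        0 ≤ (f q - f p + 2 * c * ⟪p - a, q - p⟫) + t * (c * ‖q - p‖ ^ 2) := by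
      intro t ht0 ht1
      have hz := isMinOn_iff.mp (hprox a) ((1 - t) • p + t • q) (Set.mem_univ _)
      have hfz : f ((1 - t) • p + t • q) ≤ (1 - t) * f p + t * f q :=
        hconv.2 (Set.mem_univ p) (Set.mem_univ q) (by linarith) ht0.le (by ring)
      have hnorm : ‖((1 - t) • p + t • q) - a‖ ^ 2
          = ‖p - a‖ ^ 2 + 2 * t * ⟪p - a, q - p⟫ + t ^ 2 * ‖q - p‖ ^ 2 := by
        have heq : ((1 - t) • p + t • q) - a = (p - a) + t • (q - p) := by module
        rw [heq, norm_add_sq_real, real_inner_smul_right, norm_smul]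
        simp [mul_pow, abs_of_pos ht0]
        ring
      simp only [hnorm] at hz
      have h3 : 0 ≤ t * ((f q - f p + 2 * c * ⟪p - a, q - p⟫) + t * (c * ‖q - p‖ ^ 2)) := by
        nlinarith [hz, hfz]
      nlinarith [h3, ht0]
    have := aux_small_t _ _ key
    nlinarith [this]
  -- firm nonexpansiveness
  have firm : ∀ a b, ‖prox a - prox b‖ ^ 2 ≤ ⟪a - b, prox a - prox b⟫ := by
    intro a b
    have h1 := prox_ineq a (prox b)
    have h2 := prox_ineq b (prox a)
    set p := prox a
    set q := prox b
    have hsum : 0 ≤ ⟪p - a, q - p⟫ + ⟪q - b, p - q⟫ := by nlinarith [h1, h2]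
    have hexp : ⟪p - a, q - p⟫ + ⟪q - b, p - q⟫ = ⟪a - b, p - q⟫ - ‖p - q‖ ^ 2 := by
      simp only [inner_sub_left, inner_sub_right, real_inner_self_eq_norm_sq]
      have := real_inner_comm p q
      have := real_inner_comm a p
      have := real_inner_comm a q
      have := real_inner_comm b p
      have := real_inner_comm b q
      nlinarith [norm_sub_sq_real p q]
    linarith [hsum, hexp ▸ hsum]
  -- nonexpansive
  have nonexp : ∀ a b, ‖prox a - prox b‖ ≤ ‖a - b‖ := by
    intro a b
    rcases eq_or_lt_of_le (norm_nonneg (prox a - prox b)) with h | h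
    · rw [← h]; exact norm_nonneg _
    · have h1 := firm a b
      have h2 := real_inner_le_norm (a - b) (prox a - prox b)
      nlinarith
  have hproxcont : Continuous prox := by
    apply LipschitzWith.continuous (K := 1)
    apply LipschitzWith.of_dist_le_mul
    intro a b
    simpa [dist_eq_norm] using nonexp a b
  -- minimizer is a fixed point
  have fix_of_min : ∀ w, IsMinOn f Set.univ w → prox w = w := by
    intro w hw
    have h1 := prox_ineq w w
    have h2 : ⟪prox w - w, w - prox w⟫ = -‖prox w - w‖ ^ 2 := by
      rw [show w - prox w = -(prox w - w) by abel, inner_neg_right,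
        real_inner_self_eq_norm_sq]
    have h3 := isMinOn_iff.mp hw (prox w) (Set.mem_univ _)
    have h4 : ‖prox w - w‖ ^ 2 ≤ 0 := by nlinarith
    have : prox w - w = 0 := by
      have := norm_nonneg (prox w - w)
      have : ‖prox w - w‖ = 0 := by nlinarith
      simpa [norm_eq_zero] using this
    linear_combination (norm := abel) this
  -- fixed point is a minimizer
  have min_of_fix : ∀ w, prox w = w → IsMinOn f Set.univ w := by
    intro w hw
    rw [isMinOn_iff]
    intro q _
    have h1 := prox_ineq w q
    rw [hw] at h1
    simpa using h1
  -- Fejer inequality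
  have fejer : ∀ w, prox w = w → ∀ k,
      ‖x (k + 1) - w‖ ^ 2 + (1 - τ) * (1 + τ) * ‖x k - prox (x k)‖ ^ 2 ≤ ‖x k - w‖ ^ 2 := by
    intro w hw k
    set p := prox (x k) with hp
    have hstep : x (k + 1) - w = (x k - w) - (1 - τ) • (x k - p) := by
      rw [hiter k]; module
    have hinner : ‖x k - p‖ ^ 2 ≤ ⟪x k - w, x k - p⟫ := by
      have h1 := firm (x k) w
      rw [hw] at h1
      have h2 : ⟪p - w, x k - p⟫ = ⟪x k - w, p - w⟫ - ‖p - w‖ ^ 2 := by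
        simp only [inner_sub_left, inner_sub_right, real_inner_self_eq_norm_sq]
        have := real_inner_comm (x k) p
        have := real_inner_comm (x k) w
        have := real_inner_comm w p
        nlinarith [norm_sub_sq_real p w]
      have h3 : ⟪x k - w, x k - p⟫ = ‖x k - p‖ ^ 2 + ⟪p - w, x k - p⟫ := by
        rw [show x k - w = (x k - p) + (p - w) by abel, inner_add_left,
          real_inner_self_eq_norm_sq]
      nlinarith
    have hnorm : ‖x (k + 1) - w‖ ^ 2 = ‖x k - w‖ ^ 2
        - 2 * (1 - τ) * ⟪x k - w, x k - p⟫ + (1 - τ) ^ 2 * ‖x k - p‖ ^ 2 := by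
      rw [hstep, norm_sub_sq_real, real_inner_smul_right, norm_smul]
      simp [mul_pow, abs_of_pos (by linarith : (0:ℝ) < 1 - τ)]
      ring
    nlinarith [hinner, hnorm]
  -- limit arguments
  obtain ⟨xstar, hxstar⟩ := hmin
  have hfixstar := fix_of_min xstar hxstar
  set g : ℕ → ℝ := fun k => ‖x k - xstar‖ ^ 2 with hg
  have hganti : Antitone g := by
    apply antitone_nat_of_succ_le
    intro k
    show ‖x (k + 1) - xstar‖ ^ 2 ≤ ‖x k - xstar‖ ^ 2
    have := fejer xstar hfixstar k
    nlinarith [sq_nonneg ‖x k - prox (x k)‖, mul_pos (by linarith : (0:ℝ) < 1 - τ)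
      (by linarith : (0:ℝ) < 1 + τ)]
  have hgbdd : BddBelow (Set.range g) := ⟨0, by rintro _ ⟨k, rfl⟩; positivity⟩
  have hgconv : Tendsto g atTop (nhds (⨅ k, g k)) :=
    tendsto_atTop_ciInf hganti hgbdd
  -- residual tends to zero
  have hres2 : Tendsto (fun k => ‖x k - prox (x k)‖ ^ 2) atTop (nhds 0) := by
    have hdiff : Tendsto (fun k => g k - g (k + 1)) atTop (nhds 0) := by
      have h2 : Tendsto (fun k => g (k + 1)) atTop (nhds (⨅ k, g k)) :=
        (tendsto_add_atTop_iff_nat 1).mpr hgconv |>.congr (fun k => rfl)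
      simpa using hgconv.sub h2
    have hcpos' : (0:ℝ) < (1 - τ) * (1 + τ) :=
      mul_pos (by linarith) (by linarith)
    apply squeeze_zero (fun k => by positivity)
      (g := fun k => ((1 - τ) * (1 + τ))⁻¹ * (g k - g (k + 1)))
    · intro k
      show ‖x k - prox (x k)‖ ^ 2 ≤ ((1 - τ) * (1 + τ))⁻¹ * (g k - g (k + 1))
      rw [le_inv_mul_iff₀ hcpos']
      simp only [hg]
      have := fejer xstar hfixstar k
      nlinarith
    · simpa using hdiff.const_mul ((1 - τ) * (1 + τ))⁻¹
  have hres : Tendsto (fun k => x k - prox (x k)) atTop (nhds 0) := by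
    rw [tendsto_zero_iff_norm_tendsto_zero]
    have h5 := (Real.continuous_sqrt.tendsto' 0 0 Real.sqrt_zero).comp hres2
    exact h5.congr (fun k => Real.sqrt_sq (norm_nonneg _))
  -- boundedness, subsequence
  have hbd : ∀ n, x n ∈ Metric.closedBall xstar (Real.sqrt (g 0)) := by
    intro n
    rw [Metric.mem_closedBall, dist_eq_norm]
    have h1 : g n ≤ g 0 := hganti (Nat.zero_le n)
    have := Real.sqrt_le_sqrt h1
    rwa [Real.sqrt_sq (norm_nonneg _)] at this
  obtain ⟨z, _, φ, hφmono, hφconv⟩ :=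
    tendsto_subseq_of_bounded Metric.isBounded_closedBall hbd
  -- z is a fixed point
  have hzfix : prox z = z := by
    have h1 : Tendsto (fun j => x (φ j) - prox (x (φ j))) atTop (nhds 0) :=
      hres.comp hφmono.tendsto_atTop
    have h2 : Tendsto (fun j => x (φ j) - prox (x (φ j))) atTop (nhds (z - prox z)) :=
      hφconv.sub ((hproxcont.tendsto z).comp hφconv)
    have := tendsto_nhds_unique h2 h1
    have := sub_eq_zero.mp this
    exact this.symm
  -- Fejer monotone wrt z, subsequence converges to z
  refine ⟨z, min_of_fix z hzfix, ?_⟩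
  have hganti' : Antitone (fun k => ‖x k - z‖ ^ 2) := by
    apply antitone_nat_of_succ_le
    intro k
    show ‖x (k + 1) - z‖ ^ 2 ≤ ‖x k - z‖ ^ 2
    have := fejer z hzfix k
    nlinarith [sq_nonneg ‖x k - prox (x k)‖, mul_pos (by linarith : (0:ℝ) < 1 - τ)
      (by linarith : (0:ℝ) < 1 + τ)]
  have hsub0 : Tendsto ((fun k => ‖x k - z‖ ^ 2) ∘ φ) atTop (nhds 0) := by
    have h1 : Tendsto (fun j => x (φ j) - z) atTop (nhds 0) := by
      simpa using hφconv.sub (tendsto_const_nhds (x := z))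
    have h2 := (tendsto_zero_iff_norm_tendsto_zero.mp h1)
    have := h2.pow 2
    simpa [Function.comp_def] using this
  have hall : Tendsto (fun k => ‖x k - z‖ ^ 2) atTop (nhds 0) :=
    aux_antitone_zero _ hganti' (fun n => by positivity) φ hsub0
  rw [tendsto_iff_norm_sub_tendsto_zero]
  have h5 := (Real.continuous_sqrt.tendsto' 0 0 Real.sqrt_zero).comp hall
  exact h5.congr (fun k => Real.sqrt_sq (norm_nonneg _))
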